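/- arXiv:2107.08404 — 3 statements merged into one kernel-verified Lean document; each statement's English description precedes it below -/
import Mathlib

section
/- Let p, q > 0 and C ≥ 1. Suppose that for all n ≥ 1 and all finite families (x_i) of positive semidefinite n×n complex matrices one has ‖(∑_i x_i^q)^{1/q}‖_p ≤ C ‖∑_i x_i‖_p. Then in fact ‖(∑_i x_i^q)^{1/q}‖_p ≤ ‖∑_i x_i‖_p for all such families (the constant can be improved to 1). -/
open scoped ENNReal ComplexOrder
open Matrix

open Matrix in
/-- Power of a positive semidefinite matrix via the functional calculus
(junk value `0` if the matrix is not Hermitian). -/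
noncomputable def mpow {ι : Type*} [Fintype ι] [DecidableEq ι]
    (a : Matrix ι ι ℂ) (p : ℝ) : Matrix ι ι ℂ :=
  if ha : a.IsHermitian then ha.cfc (fun x => x ^ p) else 0

open Matrix in
/-- Schatten `p`-(quasi)norm for `0 < p < ∞`: `‖a‖_p = (tr |a|^p)^(1/p)`,
where `|a|^p = (aᴴ a)^(p/2)`. -/
noncomputable def snorm {ι : Type*} [Fintype ι] [DecidableEq ι]
    (p : ℝ) (a : Matrix ι ι ℂ) : ℝ :=
  ((mpow (aᴴ * a) (p / 2)).trace).re ^ (1 / p)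

open Matrix in
/-- Schatten norm for `p ∈ (0, ∞]`; `p = ∞` gives the operator norm. -/
noncomputable def snormE {ι : Type*} [Fintype ι] [DecidableEq ι]
    (p : ℝ≥0∞) (a : Matrix ι ι ℂ) : ℝ :=
  if p = ∞ then ‖Matrix.toEuclideanCLM (𝕜 := ℂ) a‖ else snorm p.toReal a

set_option linter.unusedSectionVars false
set_option maxHeartbeats 1000000

namespace Stmt10Aux

open Matrix Complex

variable {ι κ : Type*} [Fintype ι] [DecidableEq ι] [Fintype κ] [DecidableEq κ]

/-- Decomposition: `a = u D u⋆` with `D` real diagonal. -/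
def Dec (a : Matrix ι ι ℂ) (u : Matrix.unitaryGroup ι ℂ) (d : ι → ℝ) : Prop :=
  a = (u : Matrix ι ι ℂ) * Matrix.diagonal (Complex.ofReal ∘ d) * star (u : Matrix ι ι ℂ)

lemma star_diag_real (d : ι → ℝ) :
    star (Matrix.diagonal (Complex.ofReal ∘ d)) = Matrix.diagonal (Complex.ofReal ∘ d) := by
  simp [Matrix.star_eq_conjTranspose, Matrix.diagonal_conjTranspose, Pi.star_def,
    Function.comp_def, Complex.conj_ofReal]

lemma Dec.isHermitian {a : Matrix ι ι ℂ} {u : Matrix.unitaryGroup ι ℂ} {d : ι → ℝ}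
    (h : Dec a u d) : a.IsHermitian := by
  rw [h, Matrix.star_eq_conjTranspose]
  exact Matrix.isHermitian_mul_mul_conjTranspose _
    (Matrix.isHermitian_diagonal_of_self_adjoint _
      (funext fun i => by simp [Pi.star_apply, Complex.conj_ofReal]))

lemma Dec.spectrum_eq {a : Matrix ι ι ℂ} {u : Matrix.unitaryGroup ι ℂ} {d : ι → ℝ}
    (h : Dec a u d) : spectrum ℝ a = Set.range d := by
  ext x
  conv_lhs => rw [h, Unitary.spectrum_star_right_conjugate,
    ← spectrum.algebraMap_mem_iff ℂ, spectrum_diagonal]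
  simp [Complex.coe_algebraMap]


variable {a : Matrix ι ι ℂ} {u : Matrix.unitaryGroup ι ℂ} {d : ι → ℝ}

/-- The star algebra homomorphism associated to a decomposition. -/
@[simps]
noncomputable def decAux (h : Dec a u d) : C(spectrum ℝ a, ℝ) →⋆ₐ[ℝ] Matrix ι ι ℂ where
  toFun := fun g => (u : Matrix ι ι ℂ) *
    diagonal (Complex.ofReal ∘ g ∘ (fun i ↦ (⟨d i, h.spectrum_eq ▸ Set.mem_range_self i⟩ :
      spectrum ℝ a)))
    * star (u : Matrix ι ι ℂ)
  map_one' := by simp [Pi.one_def (M := fun _ : ι ↦ ℂ)]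
  map_mul' f g := by
    have key {a b c d e f : Matrix ι ι ℂ} :
        (a * b * c) * (d * e * f) = a * (b * (c * d) * e) * f := by
      simp only [mul_assoc]
    simp only [key, ContinuousMap.coe_mul, SetLike.coe_mem, Unitary.star_mul_self_of_mem, mul_one,
      diagonal_mul_diagonal, Function.comp_apply]
    congr! with i
    simp
  map_zero' := by simp [Pi.zero_def (M := fun _ : ι ↦ ℂ)]
  map_add' f g := by
    simp only [ContinuousMap.coe_add, ← add_mul, ← mul_add, diagonal_add, Function.comp_apply]
    congr! with i
    simp
  commutes' r := by
    simp only [Function.comp_def, algebraMap_apply, smul_eq_mul, mul_one]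
    rw [← mul_one (algebraMap _ _ _), ← Unitary.coe_mul_star_self u,
      ← Algebra.left_comm, Unitary.coe_star, mul_assoc]
    congr!
  map_star' f := by
    simp only [star_trivial, StarMul.star_mul, star_star, star_eq_conjTranspose (diagonal _),
      diagonal_conjTranspose, mul_assoc]
    congr!
    ext
    simp

lemma continuous_decAux (h : Dec a u d) : Continuous (decAux h) := by
  simp only [decAux]
  refine (Continuous.matrix_mul ?_ continuous_const)
  refine (Continuous.matrix_mul continuous_const ?_)
  exact Continuous.matrix_diagonal <| continuous_pi fun i =>
    Complex.continuous_ofReal.comp (continuous_eval_const _)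

lemma Dec.cfc_eq (h : Dec a u d) (f : ℝ → ℝ) :
    cfc f a =
      (u : Matrix ι ι ℂ) * diagonal (Complex.ofReal ∘ f ∘ d) * star (u : Matrix ι ι ℂ) := by
  have ha : IsSelfAdjoint a := h.isHermitian
  have hcont : ContinuousOn f (spectrum ℝ a) := by
    rw [continuousOn_iff_continuous_restrict]; fun_prop
  have hid : decAux h (ContinuousMap.restrict (spectrum ℝ a) (ContinuousMap.id ℝ)) = a := by
    conv_rhs => rw [h]
    congr!
  have h1 : cfcHom ha = decAux h :=
    cfcHom_eq_of_continuous_of_map_id ha (decAux h) (continuous_decAux h) hid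
  rw [cfc_apply f a ha hcont, h1]
  simp only [decAux_apply]
  congr!

lemma Dec.mpow (h : Dec a u d) (r : ℝ) : Dec (mpow a r) u (fun i => d i ^ r) := by
  have ha := h.isHermitian
  unfold _root_.mpow
  rw [dif_pos ha, ← Matrix.IsHermitian.cfc_eq]
  exact h.cfc_eq _

lemma Dec.mul {b : Matrix ι ι ℂ} {e : ι → ℝ} (h : Dec a u d) (h' : Dec b u e) :
    Dec (a * b) u (fun i => d i * e i) := by
  rw [Dec, h, h']
  have key {a b c d e f : Matrix ι ι ℂ} :
      (a * b * c) * (d * e * f) = a * (b * (c * d) * e) * f := by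
    simp only [mul_assoc]
  rw [key]
  simp only [SetLike.coe_mem, Unitary.star_mul_self_of_mem, mul_one, diagonal_mul_diagonal]
  congr! with i
  simp

lemma Dec.trace_re (h : Dec a u d) : a.trace.re = ∑ i, d i := by
  rw [h, Matrix.trace_mul_cycle, Unitary.star_mul_self_of_mem (SetLike.coe_mem u), one_mul,
    Matrix.trace_diagonal]
  simp [Complex.re_sum]

lemma Dec.posSemidef (h : Dec a u d) (hd : ∀ i, 0 ≤ d i) : a.PosSemidef := by
  rw [h, Matrix.star_eq_conjTranspose]
  refine Matrix.PosSemidef.mul_mul_conjTranspose_same ?_ _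
  exact Matrix.PosSemidef.diagonal fun i => by
    simpa [Complex.zero_le_real] using Complex.zero_le_real.mpr (hd i)

lemma _root_.Matrix.PosSemidef.dec (ha : a.PosSemidef) :
    ∃ u d, (∀ i, 0 ≤ d i) ∧ Dec a u d :=
  ⟨ha.1.eigenvectorUnitary, ha.1.eigenvalues, ha.eigenvalues_nonneg, ha.1.spectral_theorem⟩


open Kronecker in
lemma star_kron (A : Matrix ι ι ℂ) (B : Matrix κ κ ℂ) :
    star (A ⊗ₖ B) = star A ⊗ₖ star B := by
  ext ⟨i, j⟩ ⟨k, l⟩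
  simp [Matrix.star_apply, Matrix.kroneckerMap_apply, star_mul']

open Kronecker in
/-- Kronecker product of unitaries. -/
noncomputable def kronU (u : Matrix.unitaryGroup ι ℂ) (v : Matrix.unitaryGroup κ ℂ) :
    Matrix.unitaryGroup (ι × κ) ℂ :=
  ⟨(u : Matrix ι ι ℂ) ⊗ₖ (v : Matrix κ κ ℂ), by
    rw [Matrix.mem_unitaryGroup_iff, star_kron, ← Matrix.mul_kronecker_mul,
      Matrix.mem_unitaryGroup_iff.mp (SetLike.coe_mem u),
      Matrix.mem_unitaryGroup_iff.mp (SetLike.coe_mem v), Matrix.one_kronecker_one]⟩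

open Kronecker in
lemma Dec.kron {a : Matrix ι ι ℂ} {u : Matrix.unitaryGroup ι ℂ} {d : ι → ℝ}
    {b : Matrix κ κ ℂ} {v : Matrix.unitaryGroup κ ℂ} {e : κ → ℝ}
    (h : Dec a u d) (h' : Dec b v e) :
    Dec (a ⊗ₖ b) (kronU u v) (fun x => d x.1 * e x.2) := by
  rw [Dec, h, h']
  show _ = _ ⊗ₖ _ * _ * star (_ ⊗ₖ _)
  rw [star_kron, Matrix.mul_kronecker_mul, Matrix.mul_kronecker_mul,
    Matrix.diagonal_kronecker_diagonal]
  congr! with x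
  simp

/-- Reindexed unitary. -/
noncomputable def reU (f : ι ≃ κ) (u : Matrix.unitaryGroup ι ℂ) :
    Matrix.unitaryGroup κ ℂ :=
  ⟨Matrix.reindex f f (u : Matrix ι ι ℂ), by
    rw [Matrix.mem_unitaryGroup_iff]
    have h1 : star (Matrix.reindex f f (u : Matrix ι ι ℂ)) =
        Matrix.reindex f f (star (u : Matrix ι ι ℂ)) := by
      simp [Matrix.star_eq_conjTranspose, Matrix.reindex_apply, Matrix.conjTranspose_submatrix]
    rw [h1, Matrix.reindex_apply, Matrix.reindex_apply, Matrix.submatrix_mul_equiv,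
      Matrix.mem_unitaryGroup_iff.mp (SetLike.coe_mem u), Matrix.submatrix_one_equiv]⟩

lemma Dec.reindex {a : Matrix ι ι ℂ} {u : Matrix.unitaryGroup ι ℂ} {d : ι → ℝ}
    (h : Dec a u d) (f : ι ≃ κ) :
    Dec (Matrix.reindex f f a) (reU f u) (d ∘ f.symm) := by
  rw [Dec, h]
  show _ = Matrix.reindex f f _ * _ * star (Matrix.reindex f f _)
  have h1 : star (Matrix.reindex f f (u : Matrix ι ι ℂ)) =
      Matrix.reindex f f (star (u : Matrix ι ι ℂ)) := by
    simp [Matrix.star_eq_conjTranspose, Matrix.reindex_apply, Matrix.conjTranspose_submatrix]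
  rw [h1]
  simp only [Matrix.reindex_apply]
  symm
  rw [show Complex.ofReal ∘ d ∘ ⇑f.symm = (Complex.ofReal ∘ d) ∘ ⇑f.symm from rfl,
    ← Matrix.submatrix_diagonal (Complex.ofReal ∘ d) f.symm f.symm.injective,
    Matrix.submatrix_mul_equiv, Matrix.submatrix_mul_equiv]


/-- trace of the `s`-th power. -/
noncomputable def Phi (s : ℝ) (a : Matrix ι ι ℂ) : ℝ := ((mpow a s).trace).re

lemma Dec.phi (h : Dec a u d) (s : ℝ) : Phi s a = ∑ i, d i ^ s :=
  (h.mpow s).trace_re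

lemma psd_mpow (ha : a.PosSemidef) (r : ℝ) : (mpow a r).PosSemidef := by
  obtain ⟨u, d, hd, h⟩ := ha.dec
  exact (h.mpow r).posSemidef fun i => Real.rpow_nonneg (hd i) r

lemma phi_nonneg (ha : a.PosSemidef) (s : ℝ) : 0 ≤ Phi s a := by
  obtain ⟨u, d, hd, h⟩ := ha.dec
  rw [h.phi]
  exact Finset.sum_nonneg fun i _ => Real.rpow_nonneg (hd i) s

lemma snorm_psd {p : ℝ} (hp : 0 < p) (ha : a.PosSemidef) :
    snorm p a = (Phi p a) ^ (1 / p) := by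
  obtain ⟨u, d, hd, h⟩ := ha.dec
  have haH : aᴴ = a := ha.isHermitian
  have hmul : Dec (a * a) u (fun i => d i * d i) := h.mul h
  unfold snorm
  rw [haH, (hmul.mpow (p / 2)).trace_re, h.phi]
  congr 1
  refine Finset.sum_congr rfl fun i _ => ?_
  rw [Real.mul_rpow (hd i) (hd i), ← Real.rpow_add' (hd i) (by positivity)]
  congr 1
  ring

lemma snorm_mpow_eq {p q : ℝ} (hp : 0 < p) (hq : 0 < q) (ha : a.PosSemidef) :
    snorm p (mpow a (1 / q)) = (Phi (p / q) a) ^ (1 / p) := by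
  obtain ⟨u, d, hd, h⟩ := ha.dec
  have h1 : Dec (mpow a (1 / q)) u (fun i => d i ^ (1 / q)) := h.mpow _
  have hpsd := h1.posSemidef fun i => Real.rpow_nonneg (hd i) _
  rw [snorm_psd hp hpsd, h1.phi, h.phi]
  congr 1
  refine Finset.sum_congr rfl fun i _ => ?_
  rw [← Real.rpow_mul (hd i)]
  congr 1
  field_simp

open Kronecker in
lemma phi_kron {b : Matrix κ κ ℂ} (ha : a.PosSemidef) (hb : b.PosSemidef) (s : ℝ) :
    Phi s (a ⊗ₖ b) = Phi s a * Phi s b := by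
  obtain ⟨u, d, hd, h⟩ := ha.dec
  obtain ⟨v, e, he, h'⟩ := hb.dec
  rw [(h.kron h').phi, h.phi, h'.phi, Finset.sum_mul_sum, Fintype.sum_prod_type]
  refine Finset.sum_congr rfl fun i _ => Finset.sum_congr rfl fun j _ => ?_
  exact Real.mul_rpow (hd i) (he j)

open Kronecker in
lemma psd_kron {b : Matrix κ κ ℂ} (ha : a.PosSemidef) (hb : b.PosSemidef) :
    (a ⊗ₖ b).PosSemidef := by
  obtain ⟨u, d, hd, h⟩ := ha.dec
  obtain ⟨v, e, he, h'⟩ := hb.dec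
  exact (h.kron h').posSemidef fun x => mul_nonneg (hd x.1) (he x.2)

open Kronecker in
lemma mpow_kron {b : Matrix κ κ ℂ} (ha : a.PosSemidef) (hb : b.PosSemidef) (r : ℝ) :
    mpow (a ⊗ₖ b) r = mpow a r ⊗ₖ mpow b r := by
  obtain ⟨u, d, hd, h⟩ := ha.dec
  obtain ⟨v, e, he, h'⟩ := hb.dec
  rw [((h.kron h').mpow r : Dec _ _ _), ((h.mpow r).kron (h'.mpow r) : Dec _ _ _)]
  have heq : (fun (x : ι × κ) => (d x.1 * e x.2) ^ r) = fun x => d x.1 ^ r * e x.2 ^ r :=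
    funext fun x => Real.mul_rpow (hd x.1) (he x.2)
  rw [heq]

lemma phi_reindex (f : ι ≃ κ) (ha : a.PosSemidef) (s : ℝ) :
    Phi s (Matrix.reindex f f a) = Phi s a := by
  obtain ⟨u, d, hd, h⟩ := ha.dec
  rw [(h.reindex f).phi, h.phi]
  exact Equiv.sum_comp f.symm (fun i => d i ^ s)

lemma mpow_reindex (f : ι ≃ κ) (ha : a.PosSemidef) (r : ℝ) :
    mpow (Matrix.reindex f f a) r = Matrix.reindex f f (mpow a r) := by
  obtain ⟨u, d, hd, h⟩ := ha.dec
  rw [((h.reindex f).mpow r : Dec _ _ _), ((h.mpow r).reindex f : Dec _ _ _)]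
  rfl

lemma psd_reindex (f : ι ≃ κ) (ha : a.PosSemidef) :
    (Matrix.reindex f f a).PosSemidef := by
  rw [Matrix.reindex_apply]
  exact ha.submatrix _

lemma psd_sum {m : Type*} [Fintype m] {x : m → Matrix ι ι ℂ}
    (hx : ∀ i, (x i).PosSemidef) : (∑ i, x i).PosSemidef := by
  classical
  refine Finset.sum_induction x _ (fun a b ha hb => ha.add hb) Matrix.PosSemidef.zero
    fun i _ => hx i

lemma reindex_sum {m : Type*} [Fintype m] (f : ι ≃ κ) (x : m → Matrix ι ι ℂ) :
    Matrix.reindex f f (∑ i, x i) = ∑ i, Matrix.reindex f f (x i) := by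
  ext k l
  simp [Matrix.reindex_apply, Matrix.submatrix_apply, Finset.sum_apply, Matrix.sum_apply]

open Kronecker in
lemma sum_kron {m m' : Type*} [Fintype m] [Fintype m']
    (x : m → Matrix ι ι ℂ) (y : m' → Matrix κ κ ℂ) :
    ∑ c : m × m', (x c.1 ⊗ₖ y c.2) = (∑ i, x i) ⊗ₖ (∑ j, y j) := by
  ext ⟨i, j⟩ ⟨k, l⟩
  simp only [Matrix.sum_apply, Matrix.kroneckerMap_apply, Finset.sum_mul_sum]
  rw [Fintype.sum_prod_type]

end Stmt10Aux


open Stmt10Aux Kronecker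

theorem stmt10 {p q : ℝ} (hp : 0 < p) (hq : 0 < q) (C : ℝ) (hC : 1 ≤ C)
    (h : ∀ (n N : ℕ), 1 ≤ n → ∀ (x : Fin N → Matrix (Fin n) (Fin n) ℂ),
      (∀ i, (x i).PosSemidef) →
      snorm p (mpow (∑ i, mpow (x i) q) (1 / q)) ≤ C * snorm p (∑ i, x i)) :
    ∀ (n N : ℕ), 1 ≤ n → ∀ (x : Fin N → Matrix (Fin n) (Fin n) ℂ),
      (∀ i, (x i).PosSemidef) →
      snorm p (mpow (∑ i, mpow (x i) q) (1 / q)) ≤ snorm p (∑ i, x i) := by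
  intro n N hn x hx
  have hxq : ∀ i, (mpow (x i) q).PosSemidef := fun i => psd_mpow (hx i) q
  have hS : (∑ i, mpow (x i) q).PosSemidef := psd_sum hxq
  have hT : (∑ i, x i).PosSemidef := psd_sum hx
  set A := Phi (p / q) (∑ i, mpow (x i) q) with hAdef
  set B := Phi p (∑ i, x i) with hBdef
  have hA0 : 0 ≤ A := phi_nonneg hS _
  have hB0 : 0 ≤ B := phi_nonneg hT _
  have key : ∀ k : ℕ, ∃ y : Fin (N ^ (k+1)) → Matrix (Fin (n ^ (k+1))) (Fin (n ^ (k+1))) ℂ,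
      (∀ i, (y i).PosSemidef) ∧
      Phi (p / q) (∑ i, mpow (y i) q) = A ^ (k+1) ∧
      Phi p (∑ i, y i) = B ^ (k+1) := by
    intro k
    induction k with
    | zero =>
      let eN : Fin (N ^ 1) ≃ Fin N := finCongr (pow_one N)
      let fE : Fin n ≃ Fin (n ^ 1) := (finCongr (pow_one n)).symm
      refine ⟨fun i => Matrix.reindex fE fE (x (eN i)),
        fun i => psd_reindex fE (hx _), ?_, ?_⟩
      · have e1 : (∑ i, mpow (Matrix.reindex fE fE (x (eN i))) q) =
            Matrix.reindex fE fE (∑ j, mpow (x j) q) := by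
          calc ∑ i, mpow (Matrix.reindex fE fE (x (eN i))) q
              = ∑ i, Matrix.reindex fE fE (mpow (x (eN i)) q) :=
                Finset.sum_congr rfl fun i _ => mpow_reindex fE (hx _) q
            _ = Matrix.reindex fE fE (∑ i, mpow (x (eN i)) q) := (reindex_sum fE _).symm
            _ = Matrix.reindex fE fE (∑ j, mpow (x j) q) := by
                rw [Equiv.sum_comp eN (fun j => mpow (x j) q)]
        rw [e1, phi_reindex fE hS, pow_one]
      · have e2 : (∑ i, Matrix.reindex fE fE (x (eN i))) =
            Matrix.reindex fE fE (∑ j, x j) := by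
          rw [← reindex_sum fE, Equiv.sum_comp eN x]
        rw [e2, phi_reindex fE hT, pow_one]
    | succ k ih =>
      obtain ⟨y, hy, hy1, hy2⟩ := ih
      have hSy : (∑ i, mpow (y i) q).PosSemidef := psd_sum fun i => psd_mpow (hy i) q
      have hTy : (∑ i, y i).PosSemidef := psd_sum hy
      let eN : Fin (N ^ (k+1+1)) ≃ Fin N × Fin (N ^ (k+1)) :=
        (finCongr (by ring)).trans finProdFinEquiv.symm
      let fE : Fin n × Fin (n ^ (k+1)) ≃ Fin (n ^ (k+1+1)) :=
        finProdFinEquiv.trans (finCongr (by ring))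
      refine ⟨fun i => Matrix.reindex fE fE ((x (eN i).1) ⊗ₖ (y (eN i).2)),
        fun i => psd_reindex fE (psd_kron (hx _) (hy _)), ?_, ?_⟩
      · have e1 : (∑ i, mpow (Matrix.reindex fE fE ((x (eN i).1) ⊗ₖ (y (eN i).2))) q) =
            Matrix.reindex fE fE ((∑ j, mpow (x j) q) ⊗ₖ (∑ j, mpow (y j) q)) := by
          calc ∑ i, mpow (Matrix.reindex fE fE ((x (eN i).1) ⊗ₖ (y (eN i).2))) q
              = ∑ i, Matrix.reindex fE fE (mpow ((x (eN i).1) ⊗ₖ (y (eN i).2)) q) :=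
                Finset.sum_congr rfl fun i _ =>
                  mpow_reindex fE (psd_kron (hx _) (hy _)) q
            _ = ∑ i, Matrix.reindex fE fE ((mpow (x (eN i).1) q) ⊗ₖ (mpow (y (eN i).2) q)) :=
                Finset.sum_congr rfl fun i _ => by rw [mpow_kron (hx _) (hy _)]
            _ = Matrix.reindex fE fE
                  (∑ i, (mpow (x (eN i).1) q) ⊗ₖ (mpow (y (eN i).2) q)) :=
                (reindex_sum fE _).symm
            _ = Matrix.reindex fE fE
                  (∑ c : Fin N × Fin (N ^ (k+1)), (mpow (x c.1) q) ⊗ₖ (mpow (y c.2) q)) := by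
                rw [Equiv.sum_comp eN (fun c => (mpow (x c.1) q) ⊗ₖ (mpow (y c.2) q))]
            _ = Matrix.reindex fE fE ((∑ j, mpow (x j) q) ⊗ₖ (∑ j, mpow (y j) q)) := by
                rw [sum_kron (fun j => mpow (x j) q) (fun j => mpow (y j) q)]
        rw [e1, phi_reindex fE (psd_kron hS hSy), phi_kron hS hSy, hy1, ← hAdef, ← pow_succ']
      · have e2 : (∑ i, Matrix.reindex fE fE ((x (eN i).1) ⊗ₖ (y (eN i).2))) =
            Matrix.reindex fE fE ((∑ j, x j) ⊗ₖ (∑ j, y j)) := by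
          rw [← reindex_sum fE, Equiv.sum_comp eN (fun c => (x c.1) ⊗ₖ (y c.2)), sum_kron x y]
        rw [e2, phi_reindex fE (psd_kron hT hTy), phi_kron hT hTy, hy2, ← hBdef, ← pow_succ']
  have powaux : ∀ x : ℝ, 0 ≤ x → ∀ m : ℕ, (x ^ m) ^ (1/p) = (x ^ (1/p)) ^ m := by
    intro x hx0 m
    rw [← Real.rpow_natCast x m, ← Real.rpow_mul hx0, mul_comm, Real.rpow_mul hx0,
      Real.rpow_natCast]
  have main : ∀ k : ℕ, (A ^ (1/p)) ^ (k+1) ≤ C * (B ^ (1/p)) ^ (k+1) := by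
    intro k
    obtain ⟨y, hy, hy1, hy2⟩ := key k
    have h1 := h (n ^ (k+1)) (N ^ (k+1)) (Nat.one_le_pow _ _ (by omega)) y hy
    rw [snorm_mpow_eq hp hq (psd_sum fun i => psd_mpow (hy i) q), hy1,
      snorm_psd hp (psd_sum hy), hy2, powaux A hA0, powaux B hB0] at h1
    exact h1
  rw [snorm_mpow_eq hp hq hS, snorm_psd hp hT]
  set a := A ^ (1/p) with hadef
  set b := B ^ (1/p) with hbdef
  have ha0 : 0 ≤ a := Real.rpow_nonneg hA0 _
  have hb0 : 0 ≤ b := Real.rpow_nonneg hB0 _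
  by_contra hab
  push_neg at hab
  rcases eq_or_lt_of_le hb0 with hb | hb
  · have h0 := main 0
    simp only [zero_add, pow_one] at h0
    rw [← hb] at h0
    simp at h0
    linarith
  · have hr : 1 < a / b := (one_lt_div hb).2 hab
    obtain ⟨m, hm⟩ := pow_unbounded_of_one_lt C hr
    have h2 := main m
    have h3 : (a / b) ^ (m+1) ≤ C := by
      rw [div_pow, div_le_iff₀ (pow_pos hb _)]
      exact h2
    have h4 : (a / b) ^ m ≤ (a / b) ^ (m+1) :=
      pow_le_pow_right₀ (le_of_lt hr) (Nat.le_succ m)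
    linarith
end

section
/- Let 0 < p < 1, x = [[1,1],[1,1]] and y_t = [[0,0],[0,t]] for t > 0. Then lim_{t → 0+} (‖x + y_t‖_p^p − 2^p)/t^p = 2^{-p}, where ‖·‖_p denotes the Schatten p-quasinorm, i.e. ‖a‖_p^p is the sum of the p-th powers of the eigenvalues of the positive matrix a. -/
open scoped ENNReal ComplexOrder
open Matrix

lemma trace_cfc' {n : Type*} [Fintype n] [DecidableEq n] {A : Matrix n n ℂ}
    (hA : A.IsHermitian) (f : ℝ → ℝ) :
    (hA.cfc f).trace = ∑ i, (f (hA.eigenvalues i) : ℂ) := by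
  rw [Matrix.IsHermitian.cfc, Unitary.conjStarAlgAut_apply, trace_mul_cycle, Unitary.coe_star_mul_self, one_mul,
    trace_diagonal]
  simp

lemma trace_eq_sum' {n : Type*} [Fintype n] [DecidableEq n] {A : Matrix n n ℂ}
    (hA : A.IsHermitian) : A.trace = ∑ i, (hA.eigenvalues i : ℂ) := by
  conv_lhs => rw [hA.spectral_theorem]
  rw [Unitary.conjStarAlgAut_apply, trace_mul_cycle, Unitary.coe_star_mul_self, one_mul, trace_diagonal]
  simp

lemma pair_eq' {e0 e1 r s : ℝ} (h1 : e0 + e1 = r + s) (h2 : e0 * e1 = r * s) :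
    (e0 = r ∧ e1 = s) ∨ (e0 = s ∧ e1 = r) := by
  have h : (e0 - r) * (e0 - s) = 0 := by linear_combination e0 * h1 - h2
  rcases mul_eq_zero.1 h with h | h
  · exact Or.inl ⟨by linarith, by linarith⟩
  · exact Or.inr ⟨by linarith, by linarith⟩

lemma sq_rpow_half {x : ℝ} (p : ℝ) (hx : 0 ≤ x) : (x ^ 2) ^ (p / 2) = x ^ p := by
  rw [← Real.rpow_natCast x 2, ← Real.rpow_mul hx]
  congr 1
  push_cast
  ring

lemma key (p t : ℝ) (hp0 : 0 < p) (ht : 0 < t) :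
    snorm p ((!![1, 1; 1, 1] : Matrix (Fin 2) (Fin 2) ℂ) + !![0, 0; 0, (t : ℂ)]) ^ p
      = ((2 + t + Real.sqrt (4 + t ^ 2)) / 2) ^ p
        + ((2 + t - Real.sqrt (4 + t ^ 2)) / 2) ^ p := by
  have hxy : (!![1, 1; 1, 1] : Matrix (Fin 2) (Fin 2) ℂ) + !![0, 0; 0, (t : ℂ)]
      = !![1, 1; 1, 1 + (t : ℂ)] := by
    ext i j; fin_cases i <;> fin_cases j <;> simp
  set A : Matrix (Fin 2) (Fin 2) ℂ := !![1, 1; 1, 1 + (t : ℂ)] with hA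
  rw [hxy]
  have hAH : Aᴴ = A := by
    ext i j; fin_cases i <;> fin_cases j <;> simp [hA, conjTranspose_apply]
  have hher : (Aᴴ * A).IsHermitian := isHermitian_conjTranspose_mul_self A
  have hAA : Aᴴ * A = !![2, 2 + (t:ℂ); 2 + (t:ℂ), 1 + (1 + (t:ℂ)) ^ 2] := by
    rw [hAH, hA, Matrix.mul_fin_two]; ring_nf
  set e0 := hher.eigenvalues 0 with he0def
  set e1 := hher.eigenvalues 1 with he1def
  have htr : (Aᴴ * A).trace = (e0 : ℂ) + (e1 : ℂ) := by
    rw [trace_eq_sum' hher, Fin.sum_univ_two]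
  have hsum : e0 + e1 = t ^ 2 + 2 * t + 4 := by
    have : ((e0 + e1 : ℝ) : ℂ) = ((t ^ 2 + 2 * t + 4 : ℝ) : ℂ) := by
      push_cast
      rw [← htr, hAA, trace_fin_two_of]; push_cast; ring
    exact_mod_cast this
  have hprod : e0 * e1 = t ^ 2 := by
    have hdet := hher.det_eq_prod_eigenvalues
    rw [Fin.prod_univ_two] at hdet
    have hdet2 : (Aᴴ * A).det = ((t ^ 2 : ℝ) : ℂ) := by
      rw [hAA, det_fin_two_of]; push_cast; ring
    rw [hdet2] at hdet
    rw [← he0def, ← he1def] at hdet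
    have hdet' : ((e0 : ℂ)) * (e1 : ℂ) = ((t ^ 2 : ℝ) : ℂ) := hdet.symm
    exact_mod_cast hdet'
  have he0 : 0 ≤ e0 := (posSemidef_conjTranspose_mul_self A).eigenvalues_nonneg 0
  have he1 : 0 ≤ e1 := (posSemidef_conjTranspose_mul_self A).eigenvalues_nonneg 1
  set sq := Real.sqrt (4 + t ^ 2) with hsqdef
  have hsq : sq ^ 2 = 4 + t ^ 2 := Real.sq_sqrt (by positivity)
  have hsqnn : 0 ≤ sq := Real.sqrt_nonneg _
  have hsqle : sq ≤ 2 + t := by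
    rw [hsqdef, show (2 + t) = Real.sqrt ((2 + t) ^ 2) from
      (Real.sqrt_sq (by linarith)).symm]
    exact Real.sqrt_le_sqrt (by nlinarith)
  set lp := (2 + t + sq) / 2 with hlpd
  set lm := (2 + t - sq) / 2 with hlmd
  have hlp : 0 ≤ lp := by positivity
  have hlm : 0 ≤ lm := by rw [hlmd]; linarith
  have hpair : (e0 = lp ^ 2 ∧ e1 = lm ^ 2) ∨ (e0 = lm ^ 2 ∧ e1 = lp ^ 2) := by
    apply pair_eq'
    · rw [hsum, hlpd, hlmd]; nlinarith
    · rw [hprod, hlpd, hlmd]; nlinarith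
  have hS : ((mpow (Aᴴ * A) (p / 2)).trace).re = lp ^ p + lm ^ p := by
    rw [mpow, dif_pos hher, trace_cfc' hher, Fin.sum_univ_two]
    rw [← he0def, ← he1def, ← Complex.ofReal_add, Complex.ofReal_re]
    rcases hpair with ⟨h0, h1⟩ | ⟨h0, h1⟩ <;>
      rw [h0, h1, sq_rpow_half p hlp, sq_rpow_half p hlm] <;> ring
  rw [snorm, hS, ← Real.rpow_mul (by positivity), one_div, inv_mul_cancel₀ hp0.ne',
    Real.rpow_one]

theorem stmt14 (p : ℝ) (hp0 : 0 < p) (hp1 : p < 1) :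
    Filter.Tendsto
      (fun t : ℝ =>
        (snorm p ((!![1, 1; 1, 1] : Matrix (Fin 2) (Fin 2) ℂ) + !![0, 0; 0, (t : ℂ)]) ^ p
            - 2 ^ p) / t ^ p)
      (nhdsWithin 0 (Set.Ioi 0)) (nhds ((2 : ℝ) ^ (-p))) := by
  have hpartB : Filter.Tendsto (fun t : ℝ => (2 / (2 + t + Real.sqrt (4 + t ^ 2))) ^ p)
      (nhdsWithin 0 (Set.Ioi 0)) (nhds ((2:ℝ) ^ (-p))) := by
    have hbase : Filter.Tendsto (fun t : ℝ => 2 / (2 + t + Real.sqrt (4 + t ^ 2)))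
        (nhdsWithin 0 (Set.Ioi 0)) (nhds (1/2)) := by
      have hc : ContinuousAt (fun t : ℝ => 2 / (2 + t + Real.sqrt (4 + t ^ 2))) 0 := by
        apply ContinuousAt.div
        · exact continuousAt_const
        · fun_prop
        · positivity
      have h0 : (fun t : ℝ => 2 / (2 + t + Real.sqrt (4 + t ^ 2))) 0 = 1/2 := by
        norm_num
      exact h0 ▸ (hc.continuousWithinAt)
    have := hbase.rpow_const (p := p) (Or.inl (by norm_num))
    convert this using 2
    rw [Real.rpow_neg (by norm_num), ← Real.inv_rpow (by norm_num)]
    norm_num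
  have hpartA : Filter.Tendsto
      (fun t : ℝ => (((2 + t + Real.sqrt (4 + t ^ 2)) / 2) ^ p - 2 ^ p) / t ^ p)
      (nhdsWithin 0 (Set.Ioi 0)) (nhds 0) := by
    have hg : Filter.Tendsto (fun t : ℝ => 2 ^ (p - 1) * t ^ (1 - p))
        (nhdsWithin 0 (Set.Ioi 0)) (nhds 0) := by
      have hc : Filter.Tendsto (fun t : ℝ => t ^ (1 - p)) (nhdsWithin 0 (Set.Ioi 0)) (nhds 0) := by
        have := (Real.continuousAt_rpow_const 0 (1 - p) (Or.inr (by linarith))).continuousWithinAt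
          (s := Set.Ioi 0)
        simpa [Real.zero_rpow (show (1:ℝ) - p ≠ 0 by linarith), ContinuousWithinAt] using this
      simpa using hc.const_mul ((2:ℝ) ^ (p - 1))
    apply tendsto_of_tendsto_of_tendsto_of_le_of_le' tendsto_const_nhds hg
    · filter_upwards [self_mem_nhdsWithin] with t ht
      have ht : (0:ℝ) < t := ht
      have hsq : Real.sqrt (4 + t ^ 2) ^ 2 = 4 + t ^ 2 := Real.sq_sqrt (by positivity)
      have hsqnn : 0 ≤ Real.sqrt (4 + t ^ 2) := Real.sqrt_nonneg _
      have h2 : (2:ℝ) ≤ (2 + t + Real.sqrt (4 + t ^ 2)) / 2 := by nlinarith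
      have := Real.rpow_le_rpow (by norm_num) h2 hp0.le
      have htp : (0:ℝ) < t ^ p := Real.rpow_pos_of_pos ht p
      exact div_nonneg (by linarith) htp.le
    · filter_upwards [self_mem_nhdsWithin] with t ht
      have ht : (0:ℝ) < t := ht
      set sq := Real.sqrt (4 + t ^ 2) with hsqd
      have hsq : sq ^ 2 = 4 + t ^ 2 := Real.sq_sqrt (by positivity)
      have hsqnn : 0 ≤ sq := Real.sqrt_nonneg _
      have hsqle : sq ≤ 2 + t := by
        rw [hsqd, show (2 + t) = Real.sqrt ((2 + t) ^ 2) from (Real.sqrt_sq (by linarith)).symm]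
        exact Real.sqrt_le_sqrt (by nlinarith)
      set lp := (2 + t + sq) / 2 with hlpd
      have hlp2 : (2:ℝ) ≤ lp := by rw [hlpd]; nlinarith
      have hlple : lp - 2 ≤ t := by rw [hlpd]; linarith
      have htp : (0:ℝ) < t ^ p := Real.rpow_pos_of_pos ht p
      rw [div_le_iff₀ htp]
      have hkey : lp ^ p ≤ 2 ^ p * (lp / 2) := by
        have h1 : lp ^ p = 2 ^ p * (lp / 2) ^ p := by
          rw [← Real.mul_rpow (by norm_num) (by linarith)]
          congr 1
          ring
        have h2 : (lp / 2) ^ p ≤ lp / 2 := by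
          calc (lp / 2) ^ p ≤ (lp / 2) ^ (1:ℝ) :=
                Real.rpow_le_rpow_of_exponent_le (by linarith) hp1.le
            _ = lp / 2 := Real.rpow_one _
        calc lp ^ p = 2 ^ p * (lp / 2) ^ p := h1
          _ ≤ 2 ^ p * (lp / 2) := by nlinarith [Real.rpow_pos_of_pos (show (0:ℝ)<2 by norm_num) p]
      have hmul : 2 ^ (p - 1) * t ^ (1 - p) * t ^ p = 2 ^ (p - 1) * t := by
        rw [mul_assoc, ← Real.rpow_add ht]
        norm_num
      rw [hmul]
      have h2p : (2:ℝ) ^ (p - 1) = 2 ^ p / 2 := by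
        rw [Real.rpow_sub (by norm_num), Real.rpow_one]
      rw [h2p]
      nlinarith [Real.rpow_pos_of_pos (show (0:ℝ)<2 by norm_num) p]
  have hsum := hpartA.add hpartB
  rw [zero_add] at hsum
  apply hsum.congr'
  filter_upwards [self_mem_nhdsWithin] with t ht
  have ht : (0:ℝ) < t := ht
  rw [key p t hp0 ht]
  set sq := Real.sqrt (4 + t ^ 2) with hsqd
  have hsq : sq ^ 2 = 4 + t ^ 2 := Real.sq_sqrt (by positivity)
  have hsqnn : 0 ≤ sq := Real.sqrt_nonneg _
  have hsqle : sq ≤ 2 + t := by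
    rw [hsqd, show (2 + t) = Real.sqrt ((2 + t) ^ 2) from (Real.sqrt_sq (by linarith)).symm]
    exact Real.sqrt_le_sqrt (by nlinarith)
  have hlm : (0:ℝ) ≤ (2 + t - sq) / 2 := by linarith
  have hdenom : (0:ℝ) < 2 + t + sq := by linarith
  have hdiv : (2 + t - sq) / 2 / t = 2 / (2 + t + sq) := by
    field_simp
    linear_combination -hsq
  have h1 : ((2 + t - sq) / 2) ^ p / t ^ p = (2 / (2 + t + sq)) ^ p := by
    rw [← Real.div_rpow hlm ht.le, hdiv]
  calc (((2 + t + sq) / 2) ^ p - 2 ^ p) / t ^ p + (2 / (2 + t + sq)) ^ p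
      = (((2 + t + sq) / 2) ^ p - 2 ^ p) / t ^ p + ((2 + t - sq) / 2) ^ p / t ^ p := by
        rw [h1]
    _ = (((2 + t + sq) / 2) ^ p + ((2 + t - sq) / 2) ^ p - 2 ^ p) / t ^ p := by ring
end

section
/- Let 0 < p < 1 < q. Then there exist 2×2 positive semidefinite complex matrices x and y such that ‖(x^q + y^q)^{1/q}‖_p > ‖x + y‖_p, where ‖·‖_p is the Schatten p-quasinorm. -/
open scoped ENNReal ComplexOrder
open Matrix

/-! ### Auxiliary lemmas -/

lemma aux_expand_prod (A : Matrix (Fin 2) (Fin 2) ℂ) (l m : ℝ) :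
    (A - l • 1) * (A - m • 1) = A * A - (l + m) • A + (l * m) • 1 := by
  simp only [sub_mul, mul_sub, smul_mul_assoc, mul_smul_comm, smul_smul, one_mul, mul_one]
  module

lemma aux_quad_eq {A : Matrix (Fin 2) (Fin 2) ℂ} {l m : ℝ}
    (h : (A - l • 1) * (A - m • 1) = 0) : A * A = (l + m) • A - (l * m) • 1 := by
  have h2 := h
  rw [aux_expand_prod] at h2
  have h3 : A * A - (l + m) • A + (l * m) • 1 - (l*m) • 1 + (l+m) • A
      = 0 - (l*m) • 1 + (l+m) • A := by rw [h2]
  calc A * A = A * A - (l + m) • A + (l * m) • 1 - (l*m) • 1 + (l+m) • A := by module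
  _ = 0 - (l*m) • 1 + (l+m) • A := h3
  _ = (l + m) • A - (l * m) • 1 := by module

lemma aux_ann_of_quad {A : Matrix (Fin 2) (Fin 2) ℂ} {σ π l m : ℝ}
    (hA : A * A = σ • A - π • 1) (hs : l + m = σ) (hp : l * m = π) :
    (A - l • 1) * (A - m • 1) = 0 := by
  rw [aux_expand_prod, hs, hp, hA]; module

lemma aux_spec_subset {A : Matrix (Fin 2) (Fin 2) ℂ} {l m : ℝ}
    (h : (A - l • 1) * (A - m • 1) = 0) : spectrum ℝ A ⊆ {l, m} := by
  intro z hz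
  by_contra hc
  simp only [Set.mem_insert_iff, Set.mem_singleton_iff, not_or] at hc
  obtain ⟨hzl, hzm⟩ := hc
  have hq := aux_quad_eq h
  rw [spectrum.mem_iff] at hz
  apply hz
  rw [Algebra.algebraMap_eq_smul_one]
  have key : (z • 1 - A) * (((z - l)*(z - m))⁻¹ • ((z - l - m) • 1 + A)) = 1 := by
    rw [mul_smul_comm]
    have expand : (z • 1 - A) * ((z - l - m) • 1 + A) = ((z-l)*(z-m)) • 1 := by
      have h4 : (z • 1 - A) * ((z - l - m) • 1 + A)
          = (z * (z - l - m)) • 1 + z • A - (z - l - m) • A - A * A := by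
        simp only [sub_mul, mul_add, add_mul, smul_mul_assoc, mul_smul_comm, smul_smul,
          one_mul, mul_one]
        module
      rw [h4, hq]
      module
    rw [expand, smul_smul, inv_mul_cancel₀ (by
      have h1 : z - l ≠ 0 := sub_ne_zero.mpr hzl
      have h2 : z - m ≠ 0 := sub_ne_zero.mpr hzm
      exact mul_ne_zero h1 h2), one_smul]
  exact ⟨⟨_, _, key, mul_eq_one_comm.mp key⟩, rfl⟩

lemma aux_spec_affine {A : Matrix (Fin 2) (Fin 2) ℂ} {l m c b l' m' : ℝ}
    (h : (A - l • 1) * (A - m • 1) = 0) (hl : c * l + b = l') (hm : c * m + b = m') :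
    spectrum ℝ (c • A + b • 1) ⊆ {l', m'} := by
  apply aux_spec_subset (l := l') (m := m')
  have h1 : c • A + b • (1 : Matrix (Fin 2) (Fin 2) ℂ) - l' • 1 = c • (A - l • 1) := by
    rw [← hl]; module
  have h2 : c • A + b • (1 : Matrix (Fin 2) (Fin 2) ℂ) - m' • 1 = c • (A - m • 1) := by
    rw [← hm]; module
  rw [h1, h2, smul_mul_assoc, mul_smul_comm, h, smul_zero, smul_zero]

lemma aux_contOn (A : Matrix (Fin 2) (Fin 2) ℂ) (f : ℝ → ℝ) :
    ContinuousOn f (spectrum ℝ A) := by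
  rw [continuousOn_iff_continuous_restrict]; fun_prop

lemma aux_cfc_affine {A : Matrix (Fin 2) (Fin 2) ℂ} (hA : A.IsHermitian) (f : ℝ → ℝ)
    {l m : ℝ} (hlm : l ≠ m) (hsub : spectrum ℝ A ⊆ {l, m}) :
    hA.cfc f = ((f l - f m)/(l - m)) • A
      + ((f m * l - f l * m)/(l - m)) • (1 : Matrix (Fin 2) (Fin 2) ℂ) := by
  have hsa : IsSelfAdjoint A := hA
  set α := (f l - f m)/(l - m)
  set β := (f m * l - f l * m)/(l - m)
  have hcongr : cfc f A = cfc (fun x : ℝ => α * x + β) A := by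
    apply cfc_congr
    intro x hx
    have key : ∀ y : ℝ, y = l ∨ y = m → f y = α * y + β := by
      intro y hy
      have hne : l - m ≠ 0 := sub_ne_zero.mpr hlm
      rcases hy with h | h <;> subst h <;> simp only [α, β] <;> field_simp <;> ring
    exact key x (hsub hx)
  rw [← hA.cfc_eq, hcongr, cfc_add _ _ _ (by exact aux_contOn A _) (by exact aux_contOn A _),
    cfc_const_mul_id α A hsa, cfc_const β A hsa, Algebra.algebraMap_eq_smul_one]

lemma aux_mpow_affine {A : Matrix (Fin 2) (Fin 2) ℂ} (hA : A.IsHermitian) (r : ℝ)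
    {l m : ℝ} (hlm : l ≠ m) (hsub : spectrum ℝ A ⊆ {l, m}) :
    mpow A r = ((l ^ r - m ^ r)/(l - m)) • A
      + ((m ^ r * l - l ^ r * m)/(l - m)) • (1 : Matrix (Fin 2) (Fin 2) ℂ) := by
  rw [mpow, dif_pos hA, aux_cfc_affine hA _ hlm hsub]

lemma aux_trace_mpow_pair {A : Matrix (Fin 2) (Fin 2) ℂ} (hA : A.IsHermitian) (r : ℝ)
    {l m : ℝ} (hlm : l ≠ m) (hsub : spectrum ℝ A ⊆ {l, m})
    (htr : A.trace = ((l + m : ℝ) : ℂ)) :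
    (mpow A r).trace = ((l ^ r + m ^ r : ℝ) : ℂ) := by
  rw [aux_mpow_affine hA r hlm hsub, trace_add, trace_smul, trace_smul, trace_one, htr]
  have hne : l - m ≠ 0 := sub_ne_zero.mpr hlm
  simp only [Complex.real_smul, Fintype.card_fin]
  push_cast
  have hneC : (l:ℂ) - m ≠ 0 := by
    intro h; apply hne; exact_mod_cast h
  field_simp
  ring

lemma aux_herm_affine {A : Matrix (Fin 2) (Fin 2) ℂ} (hA : A.IsHermitian) (c b : ℝ) :
    (c • A + b • (1 : Matrix (Fin 2) (Fin 2) ℂ)).IsHermitian := by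
  apply Matrix.IsHermitian.add
  · show (c • A)ᴴ = c • A
    rw [Matrix.conjTranspose_smul, hA, star_trivial]
  · show (b • (1:Matrix (Fin 2) (Fin 2) ℂ))ᴴ = _
    rw [Matrix.conjTranspose_smul, Matrix.conjTranspose_one, star_trivial]

/-! ### The explicit matrices -/

/-- The family `P + u • Q` where `P = e₁e₁ᵀ` and `Q = vvᵀ`, `v = (√(1-d), √d)`. -/
noncomputable def auxM (d e u : ℝ) : Matrix (Fin 2) (Fin 2) ℂ :=
  !![((1+u*(1-d) : ℝ) : ℂ), ((u*e : ℝ) : ℂ); ((u*e : ℝ) : ℂ), ((u*d : ℝ) : ℂ)]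

noncomputable def auxQ (d e : ℝ) : Matrix (Fin 2) (Fin 2) ℂ :=
  !![((1-d : ℝ) : ℂ), ((e : ℝ) : ℂ); ((e : ℝ) : ℂ), ((d : ℝ) : ℂ)]

lemma auxM_herm (d e u : ℝ) : (auxM d e u).IsHermitian := by
  ext i j
  fin_cases i <;> fin_cases j <;> simp [auxM, Matrix.conjTranspose_apply]

lemma auxQ_herm (d e : ℝ) : (auxQ d e).IsHermitian := by
  ext i j
  fin_cases i <;> fin_cases j <;> simp [auxQ, Matrix.conjTranspose_apply]

lemma auxM_mul (d e : ℝ) (he : e^2 = d*(1-d)) (u : ℝ) :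
    auxM d e u * auxM d e u = (1+u) • auxM d e u - (u*d) • 1 := by
  have heC : (e:ℂ)^2 = (d:ℂ)*(1-(d:ℂ)) := by exact_mod_cast he
  ext i j
  fin_cases i <;> fin_cases j
  · simp [auxM, Matrix.mul_apply, Fin.sum_univ_two, Matrix.one_apply]
    push_cast
    linear_combination ((u:ℂ))^2 * heC
  · simp [auxM, Matrix.mul_apply, Fin.sum_univ_two, Matrix.one_apply]
    push_cast
    ring
  · simp [auxM, Matrix.mul_apply, Fin.sum_univ_two, Matrix.one_apply]
    push_cast
    ring
  · simp [auxM, Matrix.mul_apply, Fin.sum_univ_two, Matrix.one_apply]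
    push_cast
    linear_combination ((u:ℂ))^2 * heC

lemma auxQ_mul (d e : ℝ) (he : e^2 = d*(1-d)) :
    auxQ d e * auxQ d e = auxQ d e := by
  have heC : (e:ℂ)^2 = (d:ℂ)*(1-(d:ℂ)) := by exact_mod_cast he
  ext i j
  fin_cases i <;> fin_cases j
  · simp [auxQ, Matrix.mul_apply, Fin.sum_univ_two]
    push_cast
    linear_combination heC
  · simp [auxQ, Matrix.mul_apply, Fin.sum_univ_two]
    push_cast
    ring
  · simp [auxQ, Matrix.mul_apply, Fin.sum_univ_two]
    push_cast
    ring
  · simp [auxQ, Matrix.mul_apply, Fin.sum_univ_two]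
    push_cast
    linear_combination heC

lemma auxM_trace (d e u : ℝ) : (auxM d e u).trace = ((1 + u : ℝ) : ℂ) := by
  simp [auxM, Matrix.trace_fin_two]
  push_cast
  ring

lemma auxM_add (d e u : ℝ) : auxM d e 0 + u • auxQ d e = auxM d e u := by
  ext i j
  fin_cases i <;> fin_cases j <;>
    simp [auxM, auxQ] <;> push_cast <;> ring

/-! ### Eigenvalues of `auxM d e u` -/

noncomputable def auxR (d u : ℝ) : ℝ := Real.sqrt ((1+u)^2 - 4*(u*d))
noncomputable def auxLp (d u : ℝ) : ℝ := ((1+u) + auxR d u)/2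
noncomputable def auxLm (d u : ℝ) : ℝ := ((1+u) - auxR d u)/2

lemma auxR_nonneg_arg {d u : ℝ} (hd1 : d < 1) (hu : 0 ≤ u) :
    0 ≤ (1+u)^2 - 4*(u*d) := by nlinarith [sq_nonneg (1-u)]

lemma auxR_pos {d u : ℝ} (hd1 : d < 1) (hu : 0 ≤ u) : 0 < auxR d u := by
  apply Real.sqrt_pos.mpr
  rcases eq_or_lt_of_le hu with h | h
  · subst h; norm_num
  · nlinarith [sq_nonneg (1-u)]

lemma auxR_sq {d u : ℝ} (hd1 : d < 1) (hu : 0 ≤ u) :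
    auxR d u ^ 2 = (1+u)^2 - 4*(u*d) :=
  Real.sq_sqrt (auxR_nonneg_arg hd1 hu)

lemma auxL_sum (d u : ℝ) : auxLp d u + auxLm d u = 1 + u := by
  simp only [auxLp, auxLm]; ring

lemma auxL_prod {d u : ℝ} (hd1 : d < 1) (hu : 0 ≤ u) :
    auxLp d u * auxLm d u = u * d := by
  simp only [auxLp, auxLm]
  linear_combination (-(1:ℝ)/4) * auxR_sq hd1 hu

lemma auxLm_lt_Lp {d u : ℝ} (hd1 : d < 1) (hu : 0 ≤ u) : auxLm d u < auxLp d u := by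
  have := auxR_pos hd1 hu
  simp only [auxLp, auxLm]
  linarith

lemma auxLp_ge_one {d u : ℝ} (hd0 : 0 ≤ d) (hd1 : d < 1) (hu : 0 ≤ u) :
    1 ≤ auxLp d u := by
  have h1 := auxR_sq hd1 hu
  have h2 := Real.sqrt_nonneg ((1+u)^2 - 4*(u*d))
  simp only [auxLp]
  rw [show Real.sqrt ((1+u)^2 - 4*(u*d)) = auxR d u from rfl] at h2
  nlinarith [sq_nonneg (auxR d u - (1-u)), sq_nonneg (auxR d u + (1-u)),
    mul_nonneg hu (by linarith : (0:ℝ) ≤ 1-d)]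

lemma auxLp_le {d u : ℝ} (hd0 : 0 ≤ d) (hd1 : d < 1) (hu : 0 ≤ u) :
    auxLp d u ≤ 1 + u := by
  have h1 := auxR_sq hd1 hu
  have h2 := Real.sqrt_nonneg ((1+u)^2 - 4*(u*d))
  rw [show Real.sqrt ((1+u)^2 - 4*(u*d)) = auxR d u from rfl] at h2
  simp only [auxLp]
  nlinarith [mul_nonneg hu hd0]

lemma auxLm_nonneg {d u : ℝ} (hd0 : 0 ≤ d) (hd1 : d < 1) (hu : 0 ≤ u) :
    0 ≤ auxLm d u := by
  have hprod := auxL_prod hd1 hu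
  have hlp : 0 < auxLp d u := lt_of_lt_of_le one_pos (auxLp_ge_one hd0 hd1 hu)
  by_contra h
  push_neg at h
  nlinarith [mul_nonneg hu hd0]

lemma auxLm_pos {d u : ℝ} (hd0 : 0 < d) (hd1 : d < 1) (hu : 0 < u) :
    0 < auxLm d u := by
  have hprod := auxL_prod hd1 hu.le
  have hlp : 0 < auxLp d u := lt_of_lt_of_le one_pos (auxLp_ge_one hd0.le hd1 hu.le)
  rcases lt_or_eq_of_le (auxLm_nonneg hd0.le hd1 hu.le) with h | h
  · exact h
  · exfalso; nlinarith [mul_pos hu hd0]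

lemma auxLm_le {d u : ℝ} (hd0 : 0 ≤ d) (hd1 : d < 1) (hu : 0 ≤ u) :
    auxLm d u ≤ u * d := by
  have hprod := auxL_prod hd1 hu
  have hlp := auxLp_ge_one hd0 hd1 hu
  have hlm := auxLm_nonneg hd0 hd1 hu
  nlinarith

lemma auxLm_ge {d u : ℝ} (hd0 : 0 ≤ d) (hd1 : d < 1) (hu : 0 ≤ u) :
    u * d / (1 + u) ≤ auxLm d u := by
  have hprod := auxL_prod hd1 hu
  have hlp := auxLp_le hd0 hd1 hu
  have hlm := auxLm_nonneg hd0 hd1 hu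
  rw [div_le_iff₀ (by linarith : (0:ℝ) < 1 + u)]
  nlinarith

lemma auxM_ann {d e : ℝ} (he : e^2 = d*(1-d)) {u : ℝ} (hd1 : d < 1) (hu : 0 ≤ u) :
    (auxM d e u - auxLp d u • 1) * (auxM d e u - auxLm d u • 1) = 0 :=
  aux_ann_of_quad (auxM_mul d e he u) (auxL_sum d u) (auxL_prod hd1 hu)


lemma aux_sq_rpow {x : ℝ} (hx : 0 ≤ x) (p : ℝ) : (x^2) ^ (p/2) = x ^ p := by
  rw [← Real.rpow_natCast x 2, ← Real.rpow_mul hx]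
  norm_num
  rw [show (2:ℝ)*(p/2) = p by ring]

lemma aux_psd_smul {Q : Matrix (Fin 2) (Fin 2) ℂ} (hQ : Q.PosSemidef) {t : ℝ} (ht : 0 ≤ t) :
    ((t : ℝ) • Q).PosSemidef := by
  constructor
  · show ((t:ℝ) • Q)ᴴ = _
    rw [Matrix.conjTranspose_smul, hQ.1, star_trivial]
  · intro z
    exact (hQ.smul ht).2 z

theorem stmt15 (p q : ℝ) (hp0 : 0 < p) (hp1 : p < 1) (hq : 1 < q) :
    ∃ x y : Matrix (Fin 2) (Fin 2) ℂ, x.PosSemidef ∧ y.PosSemidef ∧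
      snorm p (x + y) < snorm p (mpow (mpow x q + mpow y q) (1 / q)) := by
  have hq0 : 0 < q := by linarith
  have hq1 : 0 < q - 1 := by linarith
  obtain ⟨d, hd_def⟩ : ∃ x : ℝ, x = (2:ℝ) ^ (-(q/(q-1))) := ⟨_, rfl⟩
  have hd0 : 0 < d := hd_def ▸ Real.rpow_pos_of_pos two_pos _
  have hd1 : d < 1 := by
    rw [hd_def]
    apply Real.rpow_lt_one_of_one_lt_of_neg one_lt_two
    have : 0 < q/(q-1) := by positivity
    linarith
  have hd2 : 0 < d/2 := by linarith
  have hkey : d < (d/2) ^ ((1:ℝ)/q) := by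
    have h2 : d/2 = (2:ℝ) ^ (-(q/(q-1)) - 1) := by
      rw [hd_def, Real.rpow_sub two_pos, Real.rpow_one]
    rw [h2, hd_def, ← Real.rpow_mul (by norm_num : (0:ℝ) ≤ 2)]
    apply (Real.rpow_lt_rpow_left_iff (by norm_num : (1:ℝ) < 2)).mpr
    have hdiff : (-(q/(q-1)) - 1) * ((1:ℝ)/q) - (-(q/(q-1))) = (q-1)/q := by
      field_simp
      ring
    have hpos : 0 < (q-1)/q := div_pos hq1 hq0
    linarith
  obtain ⟨e, he_def⟩ : ∃ x : ℝ, x = Real.sqrt d * Real.sqrt (1-d) := ⟨_, rfl⟩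
  have he : e^2 = d*(1-d) := by
    rw [he_def, mul_pow, Real.sq_sqrt hd0.le, Real.sq_sqrt (by linarith)]
  obtain ⟨ε, heps_def⟩ : ∃ x : ℝ, x = (d/2)^(p/q) - d^p := ⟨_, rfl⟩
  have heps : 0 < ε := by
    have h1 : d^p < ((d/2)^((1:ℝ)/q))^p := Real.rpow_lt_rpow hd0.le hkey hp0
    rw [← Real.rpow_mul hd2.le] at h1
    rw [show (1:ℝ)/q*p = p/q by ring] at h1
    rw [heps_def]
    linarith
  obtain ⟨m0, hm0_def⟩ : ∃ x : ℝ, x = min ε 1 / 2 := ⟨_, rfl⟩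
  have hm00 : 0 < m0 := by
    have : 0 < min ε 1 := lt_min heps one_pos
    rw [hm0_def]; linarith
  have hm0le : m0 ≤ 1/2 := by
    have : min ε 1 ≤ 1 := min_le_right _ _
    rw [hm0_def]; linarith
  have hm0e : m0 < ε := by
    have h := min_le_left ε 1
    rw [hm0_def]; linarith
  have h1p : 0 < 1 - p := by linarith
  obtain ⟨t, ht_def⟩ : ∃ x : ℝ, x = m0 ^ ((1:ℝ)/(1-p)) := ⟨_, rfl⟩
  have ht0 : 0 < t := ht_def ▸ Real.rpow_pos_of_pos hm00 _
  have ht1 : t < 1 := ht_def ▸ Real.rpow_lt_one hm00.le (by linarith) (by positivity)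
  have htp : t ^ (1-p) = m0 := by
    rw [ht_def, ← Real.rpow_mul hm00.le, one_div_mul_cancel (ne_of_gt h1p), Real.rpow_one]
  obtain ⟨s, hs_def⟩ : ∃ x : ℝ, x = t ^ q := ⟨_, rfl⟩
  have hs0 : 0 < s := hs_def ▸ Real.rpow_pos_of_pos ht0 _
  have hs1 : s ≤ 1 := hs_def ▸ Real.rpow_le_one ht0.le ht1.le hq0.le
  refine ⟨auxM d e 0, (t : ℝ) • auxQ d e, ?_, ?_, ?_⟩
  · -- x is PSD
    have hx : auxM d e 0 = (!![(1:ℂ), 0] : Matrix (Fin 1) (Fin 2) ℂ)ᴴ * !![(1:ℂ), 0] := by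
      ext i j
      fin_cases i <;> fin_cases j <;>
        simp [auxM, Matrix.mul_apply, Matrix.conjTranspose_apply, Fin.sum_univ_one]
    rw [hx]
    exact Matrix.posSemidef_conjTranspose_mul_self _
  · -- y is PSD
    apply aux_psd_smul _ ht0.le
    have h1 : Real.sqrt (1-d) * Real.sqrt (1-d) = 1 - d :=
      Real.mul_self_sqrt (by linarith)
    have h2 : Real.sqrt d * Real.sqrt d = d := Real.mul_self_sqrt hd0.le
    have hQps : auxQ d e = (!![((Real.sqrt (1-d) : ℝ):ℂ), ((Real.sqrt d : ℝ):ℂ)] :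
        Matrix (Fin 1) (Fin 2) ℂ)ᴴ * !![((Real.sqrt (1-d) : ℝ):ℂ), ((Real.sqrt d : ℝ):ℂ)] := by
      ext i j
      fin_cases i <;> fin_cases j
      · simp [auxQ, Matrix.mul_apply, Matrix.conjTranspose_apply, Fin.sum_univ_one]
        exact_mod_cast h1.symm
      · simp [auxQ, Matrix.mul_apply, Matrix.conjTranspose_apply, Fin.sum_univ_one]
        exact_mod_cast (by rw [he_def]; ring :
          e = Real.sqrt (1-d) * Real.sqrt d)
      · simp [auxQ, Matrix.mul_apply, Matrix.conjTranspose_apply, Fin.sum_univ_one]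
        exact_mod_cast (by rw [he_def] :
          e = Real.sqrt d * Real.sqrt (1-d))
      · simp [auxQ, Matrix.mul_apply, Matrix.conjTranspose_apply, Fin.sum_univ_one]
        exact_mod_cast h2.symm
    rw [hQps]
    exact Matrix.posSemidef_conjTranspose_mul_self _
  · -- the norm inequality
    have hsum_t := auxL_sum d t
    have hprod_t := auxL_prod (u := t) hd1 ht0.le
    have hsum_s := auxL_sum d s
    have hprod_s := auxL_prod (u := s) hd1 hs0.le
    have hlt_t := auxLm_lt_Lp (u := t) hd1 ht0.le
    have hlt_s := auxLm_lt_Lp (u := s) hd1 hs0.le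
    have hlm_t0 := auxLm_nonneg (u := t) hd0.le hd1 ht0.le
    have hlm_s0 := auxLm_pos (u := s) hd0 hd1 hs0
    have hlp_t0 : (0:ℝ) ≤ auxLp d t := by
      linarith [auxLp_ge_one (u := t) hd0.le hd1 ht0.le]
    -- Step A : x + y = auxM d e t
    have hstepA : auxM d e 0 + (t : ℝ) • auxQ d e = auxM d e t := auxM_add d e t
    -- Step B : mpow x q = x
    have hr0 : auxR d 0 = 1 := by
      rw [auxR]; norm_num
    have hlp0 : auxLp d 0 = 1 := by rw [auxLp, hr0]; norm_num
    have hlm0 : auxLm d 0 = 0 := by rw [auxLm, hr0]; norm_num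
    have hsub0 : spectrum ℝ (auxM d e 0) ⊆ {(1:ℝ), 0} := by
      have h := aux_spec_subset (auxM_ann he hd1 (le_refl 0))
      rwa [hlp0, hlm0] at h
    have hstepB : mpow (auxM d e 0) q = auxM d e 0 := by
      rw [aux_mpow_affine (auxM_herm d e 0) q one_ne_zero hsub0]
      simp [Real.one_rpow, Real.zero_rpow (ne_of_gt hq0)]
    -- Step C : mpow y q = s • Q
    have hyherm : ((t : ℝ) • auxQ d e).IsHermitian := by
      show ((t:ℝ) • auxQ d e)ᴴ = _
      rw [Matrix.conjTranspose_smul, auxQ_herm, star_trivial]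
    have hyy : ((t : ℝ) • auxQ d e) * ((t : ℝ) • auxQ d e)
        = t • ((t : ℝ) • auxQ d e) - (0:ℝ) • 1 := by
      rw [smul_mul_assoc, mul_smul_comm, auxQ_mul d e he, zero_smul, sub_zero]
    have hanny : (((t : ℝ) • auxQ d e) - t • 1) * (((t : ℝ) • auxQ d e) - (0:ℝ) • 1) = 0 :=
      aux_ann_of_quad hyy (add_zero t) (mul_zero t)
    have hsuby : spectrum ℝ ((t : ℝ) • auxQ d e) ⊆ {t, 0} := aux_spec_subset hanny
    have hstepC : mpow ((t : ℝ) • auxQ d e) q = s • auxQ d e := by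
      rw [aux_mpow_affine hyherm q (ne_of_gt ht0) hsuby]
      rw [Real.zero_rpow (ne_of_gt hq0)]
      simp only [sub_zero, mul_zero, zero_mul, zero_sub, sub_zero, zero_div, zero_smul, add_zero]
      rw [smul_smul, div_mul_cancel₀ _ (ne_of_gt ht0), hs_def]
    -- Step D : the inner sum
    have hstepD : mpow (auxM d e 0) q + mpow ((t : ℝ) • auxQ d e) q = auxM d e s := by
      rw [hstepB, hstepC, auxM_add]
    -- Step E : the matrix B := mpow (auxM d e s) (1/q)
    have hsubs : spectrum ℝ (auxM d e s) ⊆ {auxLp d s, auxLm d s} :=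
      aux_spec_subset (auxM_ann he hd1 hs0.le)
    have hne_s : auxLp d s ≠ auxLm d s := hlt_s.ne'
    obtain ⟨mup, hmup_def⟩ : ∃ x : ℝ, x = auxLp d s ^ ((1:ℝ)/q) := ⟨_, rfl⟩
    obtain ⟨mum, hmum_def⟩ : ∃ x : ℝ, x = auxLm d s ^ ((1:ℝ)/q) := ⟨_, rfl⟩
    obtain ⟨aB, haB_def⟩ : ∃ x : ℝ, x = (mup - mum)/(auxLp d s - auxLm d s) := ⟨_, rfl⟩
    obtain ⟨bB, hbB_def⟩ : ∃ x : ℝ,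
        x = (mum * auxLp d s - mup * auxLm d s)/(auxLp d s - auxLm d s) := ⟨_, rfl⟩
    have hB : mpow (auxM d e s) ((1:ℝ)/q) = aB • auxM d e s + bB • 1 := by
      rw [aux_mpow_affine (auxM_herm d e s) ((1:ℝ)/q) hne_s hsubs, haB_def, hbB_def,
        hmup_def, hmum_def]
    have hsne : auxLp d s - auxLm d s ≠ 0 := sub_ne_zero.mpr hne_s
    have haffp : aB * auxLp d s + bB = mup := by
      rw [haB_def, hbB_def]; field_simp; ring
    have haffm : aB * auxLm d s + bB = mum := by
      rw [haB_def, hbB_def]; field_simp; ring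
    -- LHS trace evaluation
    have hherm_t := auxM_herm d e t
    have hsq_ne_t : auxLp d t ^ 2 ≠ auxLm d t ^ 2 :=
      (pow_lt_pow_left₀ hlt_t hlm_t0 two_ne_zero).ne'
    have hCann := auxM_ann he hd1 ht0.le
    have hCsub : spectrum ℝ ((1+t) • auxM d e t + (-(t*d)) • 1)
        ⊆ {auxLp d t ^ 2, auxLm d t ^ 2} := by
      apply aux_spec_affine hCann
      · linear_combination (-(auxLp d t)) * hsum_t + hprod_t
      · linear_combination (-(auxLm d t)) * hsum_t + hprod_t
    have hCherm : ((1+t) • auxM d e t + (-(t*d)) • 1).IsHermitian :=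
      aux_herm_affine hherm_t (1+t) (-(t*d))
    have hCtr : ((1+t) • auxM d e t + (-(t*d)) • 1).trace
        = ((auxLp d t ^ 2 + auxLm d t ^ 2 : ℝ) : ℂ) := by
      rw [Matrix.trace_add, Matrix.trace_smul, Matrix.trace_smul, Matrix.trace_one,
        auxM_trace]
      have hreal : (1+t) * (1+t) + (-(t*d)) * 2 = auxLp d t ^ 2 + auxLm d t ^ 2 := by
        linear_combination (-(auxLp d t + auxLm d t + 1 + t)) * hsum_t + 2 * hprod_t
      have hcard : ((Fintype.card (Fin 2) : ℕ) : ℂ) = 2 := by norm_num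
      simp only [Complex.real_smul, hcard]
      push_cast
      exact_mod_cast hreal
    have hmulC : (auxM d e t)ᴴ * (auxM d e t) = (1+t) • auxM d e t + (-(t*d)) • 1 := by
      rw [hherm_t, auxM_mul d e he t]
      module
    have htraceL : (mpow ((auxM d e t)ᴴ * (auxM d e t)) (p/2)).trace
        = (((auxLp d t)^p + (auxLm d t)^p : ℝ) : ℂ) := by
      rw [hmulC, aux_trace_mpow_pair hCherm (p/2) hsq_ne_t hCsub hCtr]
      norm_cast
      rw [aux_sq_rpow hlp_t0, aux_sq_rpow hlm_t0]
    -- RHS trace evaluation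
    have hBherm : (mpow (auxM d e s) ((1:ℝ)/q)).IsHermitian := by
      rw [hB]; exact aux_herm_affine (auxM_herm d e s) aB bB
    obtain ⟨c2, hc2_def⟩ : ∃ x : ℝ, x = aB*aB*(1+s) + 2*(aB*bB) := ⟨_, rfl⟩
    obtain ⟨b2, hb2_def⟩ : ∃ x : ℝ, x = bB*bB - aB*aB*(s*d) := ⟨_, rfl⟩
    have hBB : (mpow (auxM d e s) ((1:ℝ)/q))ᴴ * (mpow (auxM d e s) ((1:ℝ)/q))
        = c2 • auxM d e s + b2 • 1 := by
      rw [hBherm, hB]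
      have hexp : (aB • auxM d e s + bB • 1) * (aB • auxM d e s + bB • 1)
          = (aB*aB) • (auxM d e s * auxM d e s) + (2*(aB*bB)) • auxM d e s + (bB*bB) • 1 := by
        simp only [add_mul, mul_add, smul_mul_assoc, mul_smul_comm, smul_smul, one_mul, mul_one]
        module
      rw [hexp, auxM_mul d e he s, hc2_def, hb2_def]
      module
    have hviete_p : auxLp d s ^ 2 = (1+s) * auxLp d s - s*d := by
      linear_combination (auxLp d s) * hsum_s - hprod_s
    have hviete_m : auxLm d s ^ 2 = (1+s) * auxLm d s - s*d := by
      linear_combination (auxLm d s) * hsum_s - hprod_s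
    have hl' : c2 * auxLp d s + b2 = mup ^ 2 := by
      rw [← haffp, hc2_def, hb2_def]
      linear_combination (-(aB^2)) * hviete_p
    have hm' : c2 * auxLm d s + b2 = mum ^ 2 := by
      rw [← haffm, hc2_def, hb2_def]
      linear_combination (-(aB^2)) * hviete_m
    have hBsub : spectrum ℝ (c2 • auxM d e s + b2 • 1) ⊆ {mup^2, mum^2} :=
      aux_spec_affine (auxM_ann he hd1 hs0.le) hl' hm'
    have hBCherm : (c2 • auxM d e s + b2 • 1).IsHermitian :=
      aux_herm_affine (auxM_herm d e s) c2 b2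
    have hmum0 : 0 < mum := hmum_def ▸ Real.rpow_pos_of_pos hlm_s0 _
    have hmup_gt : mum < mup := by
      rw [hmup_def, hmum_def]
      exact Real.rpow_lt_rpow hlm_s0.le hlt_s (by positivity)
    have hmup0 : (0:ℝ) ≤ mup := le_of_lt (lt_trans hmum0 hmup_gt)
    have hBsq_ne : mup^2 ≠ mum^2 := (pow_lt_pow_left₀ hmup_gt hmum0.le two_ne_zero).ne'
    have hBtr : (c2 • auxM d e s + b2 • 1).trace = ((mup^2 + mum^2 : ℝ) : ℂ) := by
      rw [Matrix.trace_add, Matrix.trace_smul, Matrix.trace_smul, Matrix.trace_one,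
        auxM_trace]
      have hreal : c2 * (1+s) + b2 * 2 = mup^2 + mum^2 := by
        rw [← haffp, ← haffm, hc2_def, hb2_def]
        linear_combination (-(aB^2*(auxLp d s + auxLm d s + 1 + s) + 2*aB*bB)) * hsum_s
          + 2*aB^2 * hprod_s
      have hcard : ((Fintype.card (Fin 2) : ℕ) : ℂ) = 2 := by norm_num
      simp only [Complex.real_smul, hcard]
      push_cast
      exact_mod_cast hreal
    have htraceR : (mpow ((mpow (auxM d e s) ((1:ℝ)/q))ᴴ * (mpow (auxM d e s) ((1:ℝ)/q))) (p/2)).trace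
        = ((mup^p + mum^p : ℝ) : ℂ) := by
      rw [hBB, aux_trace_mpow_pair hBCherm (p/2) hBsq_ne hBsub hBtr]
      norm_cast
      rw [aux_sq_rpow hmup0, aux_sq_rpow hmum0.le]
    -- put everything together
    rw [hstepA, hstepD]
    show snorm p (auxM d e t) < snorm p (mpow (auxM d e s) (1/q))
    rw [show (1/q : ℝ) = ((1:ℝ)/q) from rfl]
    rw [snorm, snorm, htraceL, htraceR]
    simp only [Complex.ofReal_re]
    have hLnn : (0:ℝ) ≤ (auxLp d t)^p + (auxLm d t)^p :=
      add_nonneg (Real.rpow_nonneg hlp_t0 p) (Real.rpow_nonneg hlm_t0 p)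
    apply Real.rpow_lt_rpow hLnn ?_ (by positivity)
    -- the core real inequality
    have htp_pos : (0:ℝ) < t^p := Real.rpow_pos_of_pos ht0 p
    have h1 : (auxLp d t)^p ≤ 1 + t := by
      calc (auxLp d t)^p ≤ (1+t)^p :=
            Real.rpow_le_rpow hlp_t0 (auxLp_le hd0.le hd1 ht0.le) hp0.le
      _ ≤ (1+t)^(1:ℝ) :=
            Real.rpow_le_rpow_of_exponent_le (by linarith) hp1.le
      _ = 1 + t := Real.rpow_one _
    have h2 : (auxLm d t)^p ≤ t^p * d^p := by
      calc (auxLm d t)^p ≤ (t*d)^p :=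
            Real.rpow_le_rpow hlm_t0 (auxLm_le hd0.le hd1 ht0.le) hp0.le
      _ = t^p * d^p := Real.mul_rpow ht0.le hd0.le
    have h3 : (1:ℝ) ≤ mup^p := by
      have ha : (1:ℝ) ≤ mup := by
        rw [hmup_def]
        calc (1:ℝ) = (1:ℝ)^((1:ℝ)/q) := (Real.one_rpow _).symm
        _ ≤ auxLp d s ^ ((1:ℝ)/q) :=
              Real.rpow_le_rpow zero_le_one (auxLp_ge_one hd0.le hd1 hs0.le) (by positivity)
      calc (1:ℝ) = (1:ℝ)^p := (Real.one_rpow _).symm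
      _ ≤ mup^p := Real.rpow_le_rpow zero_le_one ha hp0.le
    have h4 : t^p * (d/2)^(p/q) ≤ mum^p := by
      have hb1 : s*(d/2) ≤ auxLm d s := by
        have hge := auxLm_ge (u := s) hd0.le hd1 hs0.le
        have hdd : s*d/2 ≤ s*d/(1+s) := by
          apply div_le_div_of_nonneg_left (mul_nonneg hs0.le hd0.le) (by linarith) (by linarith)
        calc s*(d/2) = s*d/2 := by ring
        _ ≤ s*d/(1+s) := hdd
        _ ≤ auxLm d s := hge
      have hb2 : t * (d/2)^((1:ℝ)/q) ≤ mum := by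
        rw [hmum_def]
        have h5 : (s*(d/2))^((1:ℝ)/q) ≤ auxLm d s ^ ((1:ℝ)/q) :=
          Real.rpow_le_rpow (by positivity) hb1 (by positivity)
        have h6 : (s*(d/2))^((1:ℝ)/q) = t * (d/2)^((1:ℝ)/q) := by
          rw [Real.mul_rpow hs0.le hd2.le, hs_def, ← Real.rpow_mul ht0.le,
            mul_one_div_cancel (ne_of_gt hq0), Real.rpow_one]
        rw [← h6]
        exact h5
      calc t^p * (d/2)^(p/q) = (t * (d/2)^((1:ℝ)/q))^p := by
            rw [Real.mul_rpow ht0.le (Real.rpow_nonneg hd2.le _),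
              ← Real.rpow_mul hd2.le]
            rw [show (1:ℝ)/q*p = p/q by ring]
      _ ≤ mum^p := Real.rpow_le_rpow (by positivity) hb2 hp0.le
    have h5 : t + t^p * d^p < t^p * (d/2)^(p/q) := by
      have hsplit : t = t^p * m0 := by
        rw [← htp, ← Real.rpow_add ht0, show p + (1-p) = (1:ℝ) by ring, Real.rpow_one]
      have heq : (d/2)^(p/q) = ε + d^p := by rw [heps_def]; ring
      have hlt : t^p * m0 < t^p * ε := mul_lt_mul_of_pos_left hm0e htp_pos
      calc t + t^p*d^p = t^p * m0 + t^p*d^p := by rw [← hsplit]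
      _ < t^p * ε + t^p*d^p := by linarith
      _ = t^p * (d/2)^(p/q) := by rw [heq]; ring
    linarith
end
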